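/- There exist c > 0 and K ∈ ℕ (depending on β, m) such that for all k₁, k₂, k₃ ∈ ℤ \ {0} with k₁ + k₂ + k₃ = 0 and max{|k₁|, |k₂|, |k₃|} ≥ K, one has |λ_{k₁} + λ_{k₂} + λ_{k₃}| ≥ c · (max{|k₁|, |k₂|, |k₃|})^{2m} · min{|k₁|, |k₂|, |k₃|}. -/

import Mathlib

private lemma maxshape3 {G : Type*} [AddCommGroup G] [LinearOrder G] [IsOrderedAddMonoid G] (x y : G)
    (hx : 0 ≤ x) (hy : 0 ≤ y) : max x (max y (x + y)) = x + y := by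
  rw [max_eq_right (le_add_of_nonneg_left hx), max_eq_right (le_add_of_nonneg_right hy)]

private lemma minshape3 {G : Type*} [AddCommGroup G] [LinearOrder G] [IsOrderedAddMonoid G] (x y : G)
    (hx : 0 ≤ x) (hy : 0 ≤ y) : min x (min y (x + y)) = min x y := by
  rw [min_eq_left (le_add_of_nonneg_left hx)]

private lemma bern_low {q : ℝ} (hq : 0 ≤ q) {u v : ℝ} (hu : 0 < u) (hv : 0 < v) :
    v ^ (q + 1) + (q + 1) * u * v ^ q ≤ (u + v) ^ (q + 1) := by
  have hvne : v ≠ 0 := hv.ne'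
  have hsv : (-1 : ℝ) ≤ u / v := le_trans (by norm_num) (div_nonneg hu.le hv.le)
  have hb := one_add_mul_self_le_rpow_one_add hsv (by linarith : (1:ℝ) ≤ q + 1)
  have hmul := mul_le_mul_of_nonneg_right hb (Real.rpow_pos_of_pos hv (q + 1)).le
  have e1 : (1 + u / v) ^ (q + 1) * v ^ (q + 1) = (u + v) ^ (q + 1) := by
    rw [← Real.mul_rpow (by positivity) hv.le]
    congr 1
    field_simp
    ring
  have e2 : (1 + (q + 1) * (u / v)) * v ^ (q + 1) = v ^ (q + 1) + (q + 1) * u * v ^ q := by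
    rw [Real.rpow_add_one hvne q]
    field_simp
  calc v ^ (q + 1) + (q + 1) * u * v ^ q = (1 + (q + 1) * (u / v)) * v ^ (q + 1) := e2.symm
    _ ≤ (1 + u / v) ^ (q + 1) * v ^ (q + 1) := hmul
    _ = (u + v) ^ (q + 1) := e1

private lemma bern_up {q : ℝ} (hq : 0 ≤ q) {u v : ℝ} (hu : 0 < u) (hv : 0 < v) :
    (u + v) ^ (q + 1) ≤ v ^ (q + 1) + (q + 1) * u * (u + v) ^ q := by
  have huv : (0 : ℝ) < u + v := by linarith
  have huvne : u + v ≠ 0 := huv.ne'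
  have h1 : u / (u + v) ≤ 1 := (div_le_one huv).mpr (by linarith)
  have hs : (-1 : ℝ) ≤ -(u / (u + v)) := by linarith
  have hb := one_add_mul_self_le_rpow_one_add hs (by linarith : (1:ℝ) ≤ q + 1)
  have e0 : 1 + -(u / (u + v)) = v / (u + v) := by field_simp; ring
  rw [e0] at hb
  have hmul := mul_le_mul_of_nonneg_right hb (Real.rpow_pos_of_pos huv (q + 1)).le
  have e1 : (v / (u + v)) ^ (q + 1) * (u + v) ^ (q + 1) = v ^ (q + 1) := by
    rw [← Real.mul_rpow (by positivity) huv.le]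
    congr 1
    field_simp
  have e2 : (1 + (q + 1) * -(u / (u + v))) * (u + v) ^ (q + 1)
      = (u + v) ^ (q + 1) - (q + 1) * u * (u + v) ^ q := by
    rw [Real.rpow_add_one huvne q]
    field_simp
    ring
  rw [e1, e2] at hmul
  linarith

private lemma key_aux (α β m r : ℝ) (hα : 0 < α) (hβ : 0 < β) (hr : 0 < r) (hrm : r < m)
    {u v : ℝ} (hu : 0 < u) (hv : 0 < v) (huv : u ≤ v)
    (hM : max 1 ((α * (2*r+1) * 2^(2*m) / (β*m)) ^ ((2*m - 2*r)⁻¹)) ≤ u + v) :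
    β * m / 2^(2*m) * (u+v)^(2*m) * min u v ≤
      β * ((u+v) * (u+v)^(2*m) - (u * u^(2*m) + v * v^(2*m)))
        - α * ((u+v) * (u+v)^(2*r) - (u * u^(2*r) + v * v^(2*r))) := by
  have hm : 0 < m := lt_trans hr hrm
  have hadd : (0:ℝ) < u + v := by linarith
  have hm0 : (0:ℝ) ≤ 2*m := by linarith
  have hr0 : (0:ℝ) ≤ 2*r := by linarith
  have ex : ∀ x : ℝ, 0 < x → ∀ e : ℝ, x * x^e = x^(e+1) := by
    intro x hx e
    rw [Real.rpow_add_one hx.ne' e]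
    ring
  rw [ex _ hadd (2*m), ex _ hadd (2*r), ex _ hu (2*m), ex _ hu (2*r),
    ex _ hv (2*m), ex _ hv (2*r), min_eq_left huv]
  have h1 : v^(2*m+1) + (2*m+1)*u*v^(2*m) ≤ (u+v)^(2*m+1) := bern_low hm0 hu hv
  have h2 : (u+v)^(2*r+1) ≤ v^(2*r+1) + (2*r+1)*u*(u+v)^(2*r) := bern_up hr0 hu hv
  have h3 : u^(2*m+1) ≤ u * v^(2*m) := by
    rw [← ex u hu (2*m)]
    exact mul_le_mul_of_nonneg_left (Real.rpow_le_rpow hu.le huv hm0) hu.le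
  have h4 : 0 < u^(2*r+1) := Real.rpow_pos_of_pos hu _
  have h5 : (u+v)^(2*m) / 2^(2*m) ≤ v^(2*m) := by
    have hv2 : (u+v)/2 ≤ v := by linarith
    calc (u+v)^(2*m) / 2^(2*m) = ((u+v)/2)^(2*m) :=
          (Real.div_rpow hadd.le (by norm_num) _).symm
      _ ≤ v^(2*m) := Real.rpow_le_rpow (by positivity) hv2 hm0
  have h7 : 2*m*u*((u+v)^(2*m)/2^(2*m)) ≤ 2*m*u*v^(2*m) :=
    mul_le_mul_of_nonneg_left h5 (by positivity)
  have h6 : α*(2*r+1)*(u+v)^(2*r) ≤ β*m/2^(2*m) * (u+v)^(2*m) := by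
    have hApos : 0 < α * (2*r+1) * 2^(2*m) / (β*m) := by positivity
    have hM1 : 1 ≤ u + v := le_trans (le_max_left _ _) hM
    have hMA : (α * (2*r+1) * 2^(2*m) / (β*m)) ^ ((2*m - 2*r)⁻¹) ≤ u + v :=
      le_trans (le_max_right _ _) hM
    have hsub : (0:ℝ) < 2*m - 2*r := by linarith
    have hA2 : α * (2*r+1) * 2^(2*m) / (β*m) ≤ (u+v)^(2*m-2*r) := by
      have h := Real.rpow_le_rpow (by positivity) hMA hsub.le
      rwa [← Real.rpow_mul hApos.le, inv_mul_cancel₀ hsub.ne', Real.rpow_one] at h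
    have hsplit : (u+v)^(2*m) = (u+v)^(2*m-2*r) * (u+v)^(2*r) := by
      rw [← Real.rpow_add hadd]
      ring_nf
    have h2m : (2:ℝ)^(2*m) ≠ 0 := by positivity
    have hβm : β * m ≠ 0 := by positivity
    have hcoe : β*m/2^(2*m) * (α * (2*r+1) * 2^(2*m) / (β*m)) = α*(2*r+1) := by
      field_simp
    calc α*(2*r+1)*(u+v)^(2*r) = (β*m/2^(2*m) * (α * (2*r+1) * 2^(2*m) / (β*m))) * (u+v)^(2*r) := by
          rw [hcoe]
      _ ≤ (β*m/2^(2*m) * ((u+v)^(2*m-2*r))) * (u+v)^(2*r) := by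
          have := mul_le_mul_of_nonneg_left hA2 (le_of_lt (by positivity : (0:ℝ) < β*m/2^(2*m)))
          exact mul_le_mul_of_nonneg_right this (by positivity)
      _ = β*m/2^(2*m) * (u+v)^(2*m) := by rw [hsplit]; ring
  have hDm : 2*m*u*((u+v)^(2*m)/2^(2*m)) ≤ (u+v)^(2*m+1) - (u^(2*m+1) + v^(2*m+1)) := by
    nlinarith [h1, h3, h7]
  have hDr : (u+v)^(2*r+1) - (u^(2*r+1) + v^(2*r+1)) ≤ (2*r+1)*u*(u+v)^(2*r) := by
    nlinarith [h2, h4]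
  have hDm' := mul_le_mul_of_nonneg_left hDm hβ.le
  have hDr' := mul_le_mul_of_nonneg_left hDr hα.le
  have h8 := mul_le_mul_of_nonneg_right h6 hu.le
  have h2mpos : (0:ℝ) < 2^(2*m) := by positivity
  have e9 : β * (2*m*u*((u+v)^(2*m)/2^(2*m))) = 2 * (β*m/2^(2*m) * (u+v)^(2*m) * u) := by
    field_simp
  have e10 : α * ((2*r+1)*u*(u+v)^(2*r)) = α*(2*r+1)*(u+v)^(2*r) * u := by ring
  linarith [hDm', hDr', h8, e9 ▸ hDm']

private lemma key_real (α β m r : ℝ) (hα : 0 < α) (hβ : 0 < β) (hr : 0 < r) (hrm : r < m) :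
    ∃ c > 0, ∃ K₀ : ℝ, ∀ u v : ℝ, 0 < u → 0 < v → K₀ ≤ u + v →
      c * (u+v)^(2*m) * min u v ≤
        β * ((u+v) * (u+v)^(2*m) - (u * u^(2*m) + v * v^(2*m)))
          - α * ((u+v) * (u+v)^(2*r) - (u * u^(2*r) + v * v^(2*r))) := by
  have hm : 0 < m := lt_trans hr hrm
  refine ⟨β * m / 2^(2*m), by positivity,
    max 1 ((α * (2*r+1) * 2^(2*m) / (β*m)) ^ ((2*m - 2*r)⁻¹)), ?_⟩
  intro u v hu hv hM
  rcases le_total u v with huv | huv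
  · exact key_aux α β m r hα hβ hr hrm hu hv huv hM
  · have h := key_aux α β m r hα hβ hr hrm hv hu huv (by rwa [add_comm v u])
    rw [add_comm v u, min_comm v u] at h
    linarith

/-- there are `c > 0` and `K ∈ ℕ` such that for all nonzero
`k₁, k₂, k₃ ∈ ℤ` with `k₁ + k₂ + k₃ = 0` and `max |k_j| ≥ K`,
`|λ_{k₁} + λ_{k₂} + λ_{k₃}| ≥ c (max_j |k_j|)^{2m} (min_j |k_j|)`. -/
theorem resonance_lower_bound
    (α β μ m r : ℝ) (hα : 0 < α) (hβ : 0 < β) (hr : 0 < r) (hrm : r < m)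
    (lam : ℤ → ℝ)
    (hlam : ∀ k : ℤ, lam k =
      -β * (k : ℝ) * |(k : ℝ)| ^ (2 * m) + α * (k : ℝ) * |(k : ℝ)| ^ (2 * r) - 2 * μ * (k : ℝ)) :
    ∃ c > 0, ∃ K : ℕ, ∀ k₁ k₂ k₃ : ℤ, k₁ ≠ 0 → k₂ ≠ 0 → k₃ ≠ 0 →
      k₁ + k₂ + k₃ = 0 → (K : ℤ) ≤ max |k₁| (max |k₂| |k₃|) →
      c * max |(k₁ : ℝ)| (max |(k₂ : ℝ)| |(k₃ : ℝ)|) ^ (2 * m)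
          * min |(k₁ : ℝ)| (min |(k₂ : ℝ)| |(k₃ : ℝ)|)
        ≤ |lam k₁ + lam k₂ + lam k₃| := by
  obtain ⟨c, hc, K₀, hkey⟩ := key_real α β m r hα hβ hr hrm
  refine ⟨c, hc, ⌈K₀⌉₊, ?_⟩
  have lodd : ∀ k : ℤ, lam (-k) = -lam k := by
    intro k
    rw [hlam, hlam]
    push_cast
    rw [abs_neg]
    ring
  have helper : ∀ a b : ℤ, 0 < a → 0 < b → (⌈K₀⌉₊ : ℤ) ≤ a + b →
      c * ((a:ℝ) + b)^(2*m) * min (a:ℝ) (b:ℝ) ≤ lam a + lam b + lam (-(a+b)) := by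
    intro a b ha hb hab
    have haR : (0:ℝ) < a := by exact_mod_cast ha
    have hbR : (0:ℝ) < b := by exact_mod_cast hb
    have habR : K₀ ≤ (a:ℝ) + b := by
      have h1 : ((⌈K₀⌉₊ : ℤ) : ℝ) ≤ ((a + b : ℤ) : ℝ) := by exact_mod_cast hab
      push_cast at h1
      exact (Nat.le_ceil K₀).trans h1
    have hkey' := hkey (a:ℝ) (b:ℝ) haR hbR habR
    have hsum_eq : lam a + lam b + lam (-(a+b)) =
        β * (((a:ℝ)+b) * ((a:ℝ)+b)^(2*m) - ((a:ℝ) * (a:ℝ)^(2*m) + (b:ℝ) * (b:ℝ)^(2*m)))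
          - α * (((a:ℝ)+b) * ((a:ℝ)+b)^(2*r) - ((a:ℝ) * (a:ℝ)^(2*r) + (b:ℝ) * (b:ℝ)^(2*r))) := by
      rw [hlam, hlam, hlam]
      push_cast
      rw [abs_neg, abs_of_pos haR, abs_of_pos hbR, abs_of_pos (by linarith : (0:ℝ) < (a:ℝ) + b)]
      ring
    rw [hsum_eq]
    exact hkey'
  have claim2 : ∀ a b : ℤ, 0 < a → 0 < b → (⌈K₀⌉₊ : ℤ) ≤ a + b →
      c * max |(a:ℝ)| (max |(b:ℝ)| |((-(a+b) : ℤ) : ℝ)|) ^ (2*m)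
          * min |(a:ℝ)| (min |(b:ℝ)| |((-(a+b) : ℤ) : ℝ)|)
        ≤ |lam a + lam b + lam (-(a+b))| := by
    intro a b ha hb hab
    have haR : (0:ℝ) < a := by exact_mod_cast ha
    have hbR : (0:ℝ) < b := by exact_mod_cast hb
    have e : ((-(a+b) : ℤ) : ℝ) = -((a:ℝ) + b) := by push_cast; ring
    rw [e, abs_neg, abs_of_pos haR, abs_of_pos hbR,
      abs_of_pos (by linarith : (0:ℝ) < (a:ℝ) + b),
      maxshape3 _ _ haR.le hbR.le, minshape3 _ _ haR.le hbR.le]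
    exact (helper a b ha hb hab).trans (le_abs_self _)
  intro k₁ k₂ k₃ h₁ h₂ h₃ hsum hK
  rcases h₁.lt_or_gt with hk₁ | hk₁
  · rcases h₂.lt_or_gt with hk₂ | hk₂
    · -- k₁ < 0, k₂ < 0, so k₃ > 0
      have hk₃ : 0 < k₃ := by omega
      have e : -(-k₁ + -k₂) = -k₃ := by omega
      have hKab : (⌈K₀⌉₊ : ℤ) ≤ -k₁ + -k₂ := by
        rw [abs_of_neg hk₁, abs_of_neg hk₂, abs_of_pos hk₃] at hK
        exact hK.trans (max_le (by omega) (max_le (by omega) (by omega)))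
      have h := claim2 (-k₁) (-k₂) (by omega) (by omega) hKab
      rw [e] at h
      simp only [Int.cast_neg, abs_neg] at h
      rw [lodd, lodd, lodd,
        show -lam k₁ + -lam k₂ + -lam k₃ = -(lam k₁ + lam k₂ + lam k₃) from by ring,
        abs_neg] at h
      exact h
    · rcases h₃.lt_or_gt with hk₃ | hk₃
      · -- k₁ < 0, k₂ > 0, k₃ < 0
        have e : -(-k₁ + -k₃) = -k₂ := by omega
        have hKab : (⌈K₀⌉₊ : ℤ) ≤ -k₁ + -k₃ := by
          rw [abs_of_neg hk₁, abs_of_pos hk₂, abs_of_neg hk₃] at hK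
          exact hK.trans (max_le (by omega) (max_le (by omega) (by omega)))
        have h := claim2 (-k₁) (-k₃) (by omega) (by omega) hKab
        rw [e] at h
        simp only [Int.cast_neg, abs_neg] at h
        rw [lodd, lodd, lodd,
          show -lam k₁ + -lam k₃ + -lam k₂ = -(lam k₁ + lam k₂ + lam k₃) from by ring,
          abs_neg, max_comm |(k₃:ℝ)| |(k₂:ℝ)|, min_comm |(k₃:ℝ)| |(k₂:ℝ)|] at h
        exact h
      · -- k₁ < 0, k₂ > 0, k₃ > 0
        have e : k₁ = -(k₂ + k₃) := by omega
        subst e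
        have hKab : (⌈K₀⌉₊ : ℤ) ≤ k₂ + k₃ := by
          rw [abs_neg, abs_of_pos (by omega : (0:ℤ) < k₂ + k₃), abs_of_pos hk₂,
            abs_of_pos hk₃] at hK
          exact hK.trans (max_le le_rfl (max_le (by omega) (by omega)))
        have h := claim2 k₂ k₃ hk₂ hk₃ hKab
        rw [show lam (-(k₂+k₃)) + lam k₂ + lam k₃ = lam k₂ + lam k₃ + lam (-(k₂+k₃)) from by ring,
          max_comm |((-(k₂+k₃) : ℤ) : ℝ)| (max |(k₂:ℝ)| |(k₃:ℝ)|), max_assoc,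
          min_comm |((-(k₂+k₃) : ℤ) : ℝ)| (min |(k₂:ℝ)| |(k₃:ℝ)|), min_assoc]
        exact h
  · rcases h₂.lt_or_gt with hk₂ | hk₂
    · rcases h₃.lt_or_gt with hk₃ | hk₃
      · -- k₁ > 0, k₂ < 0, k₃ < 0
        have e : -(-k₂ + -k₃) = -k₁ := by omega
        have hKab : (⌈K₀⌉₊ : ℤ) ≤ -k₂ + -k₃ := by
          rw [abs_of_pos hk₁, abs_of_neg hk₂, abs_of_neg hk₃] at hK
          exact hK.trans (max_le (by omega) (max_le (by omega) (by omega)))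
        have h := claim2 (-k₂) (-k₃) (by omega) (by omega) hKab
        rw [e] at h
        simp only [Int.cast_neg, abs_neg] at h
        rw [lodd, lodd, lodd,
          show -lam k₂ + -lam k₃ + -lam k₁ = -(lam k₁ + lam k₂ + lam k₃) from by ring,
          abs_neg, max_comm |(k₃:ℝ)| |(k₁:ℝ)|, max_left_comm,
          min_comm |(k₃:ℝ)| |(k₁:ℝ)|, min_left_comm] at h
        exact h
      · -- k₁ > 0, k₂ < 0, k₃ > 0
        have e : k₂ = -(k₁ + k₃) := by omega
        subst e
        have hKab : (⌈K₀⌉₊ : ℤ) ≤ k₁ + k₃ := by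
          rw [abs_of_pos hk₁, abs_neg, abs_of_pos (by omega : (0:ℤ) < k₁ + k₃),
            abs_of_pos hk₃] at hK
          exact hK.trans (max_le (by omega) (max_le le_rfl (by omega)))
        have h := claim2 k₁ k₃ hk₁ hk₃ hKab
        rw [show lam k₁ + lam (-(k₁+k₃)) + lam k₃ = lam k₁ + lam k₃ + lam (-(k₁+k₃)) from by ring,
          max_comm |((-(k₁+k₃) : ℤ) : ℝ)| |(k₃:ℝ)|, min_comm |((-(k₁+k₃) : ℤ) : ℝ)| |(k₃:ℝ)|]
        exact h
    · -- k₁ > 0, k₂ > 0, so k₃ < 0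
      have e : k₃ = -(k₁ + k₂) := by omega
      subst e
      have hKab : (⌈K₀⌉₊ : ℤ) ≤ k₁ + k₂ := by
        rw [abs_of_pos hk₁, abs_of_pos hk₂, abs_neg,
          abs_of_pos (by omega : (0:ℤ) < k₁ + k₂)] at hK
        exact hK.trans_eq (maxshape3 _ _ hk₁.le hk₂.le)
      exact claim2 k₁ k₂ hk₁ hk₂ hKab
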